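/- With Γ, f_S, Q_S on ℓ₁(ω₂+1) as above, the family {Q_S : S ∈ Γ} is not commutative on any cofinal subset: for every cofinal Γ' ⊆ Γ there exist S, T ∈ Γ' with Q_S ∘ Q_T ≠ Q_T ∘ Q_S. Consequently there exist S, T ∈ Γ and ξ ≤ ω₂ such that f_S(f_T(ξ)) ≠ f_T(f_S(ξ)). -/

import Mathlib

noncomputable section

open scoped Cardinal

/-- The ordinal `ω₂`. -/
def om2 : Ordinal.{0} := (Cardinal.aleph 2).ord

/-- The index set `ω₂ + 1 = [0, ω₂]`. -/
abbrev OmTwoPlusOne : Type 1 := Set.Iic om2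

/-- The Banach space `ℓ₁(ω₂ + 1)`. -/
abbrev ellOne : Type 1 := lp (fun _ : OmTwoPlusOne => ℝ) 1

/-- `f_S(α) = min (S ∩ [α, ω₂])`. -/
def fS (S : Set Ordinal) (α : Ordinal) : Ordinal := sInf (S ∩ Set.Ici α)

/-- The poset `Γ` of countable subsets of `ω₂ + 1` containing `ω₂`. -/
def skelΓ : Set (Set Ordinal) :=
  {S | S.Countable ∧ om2 ∈ S ∧ S ⊆ Set.Iic om2}

local instance : DecidableEq OmTwoPlusOne := Classical.decEq _

lemma fS_le_om2 {S : Set Ordinal} (hS : S ∈ skelΓ) {ξ : Ordinal} (hξ : ξ ≤ om2) :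
    fS S ξ ≤ om2 :=
  csInf_le (OrderBot.bddBelow _) ⟨hS.2.1, hξ⟩

lemma Q_single (Q : Set Ordinal → (ellOne →L[ℝ] ellOne))
    (hQ : ∀ S ∈ skelΓ, ∀ (x : ellOne) (β : OmTwoPlusOne),
      Q S x β = ∑' ξ : {ξ : OmTwoPlusOne // fS S ξ.val = β.val}, x ξ)
    {S : Set Ordinal} (hS : S ∈ skelΓ) (ξ : OmTwoPlusOne) :
    Q S (lp.single 1 ξ 1) = lp.single 1 (⟨fS S ξ.val, fS_le_om2 hS ξ.2⟩ : OmTwoPlusOne) 1 := by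
  set fξ : OmTwoPlusOne := ⟨fS S ξ.val, fS_le_om2 hS ξ.2⟩ with hfξ
  apply lp.ext
  funext β
  rw [hQ S hS _ β]
  by_cases hβ : β = fξ
  · subst hβ
    rw [lp.single_apply_self]
    have hmem : fS S (ξ : OmTwoPlusOne).val = fξ.val := rfl
    rw [tsum_eq_single (⟨ξ, hmem⟩ : {ζ : OmTwoPlusOne // fS S ζ.val = fξ.val})]
    · exact lp.single_apply_self 1 ξ 1
    · intro ζ hζ
      apply lp.single_apply_ne
      intro hc
      exact hζ (Subtype.ext hc)
  · rw [lp.single_apply_ne 1 _ _ hβ]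
    have : (fun ζ : {ζ : OmTwoPlusOne // fS S ζ.val = β.val} =>
        (lp.single 1 ξ (1:ℝ) : ellOne) ζ.val) = fun _ => 0 := by
      funext ζ
      apply lp.single_apply_ne
      intro hc
      apply hβ
      apply Subtype.ext
      rw [hfξ]
      show β.val = fS S ξ.val
      rw [← ζ.2, hc]
    rw [this, tsum_zero]

def om1 : Ordinal.{0} := (Cardinal.aleph 1).ord

lemma om2_isLimit : Order.IsSuccLimit om2 := Cardinal.isSuccLimit_ord (Cardinal.aleph0_le_aleph 2)
lemma om1_isLimit : Order.IsSuccLimit om1 := Cardinal.isSuccLimit_ord (Cardinal.aleph0_le_aleph 1)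

lemma cof_om2 : om2.cof = Cardinal.aleph 2 := by
  have h2 : (2 : Ordinal) = Order.succ 1 := by
    rw [← Ordinal.add_one_eq_succ, one_add_one_eq_two]
  rw [om2, h2]
  exact (Cardinal.isRegular_aleph_succ 1).cof_eq

lemma cof_om1 : om1.cof = Cardinal.aleph 1 := Cardinal.isRegular_aleph_one.cof_eq

lemma aleph_one_lt_two : Cardinal.aleph 1 < Cardinal.aleph 2 :=
  Cardinal.aleph_lt_aleph.2 one_lt_two

lemma iSup_lt_om2 {ι : Type} {f : ι → Ordinal} (hι : #ι < Cardinal.aleph 2)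
    (hf : ∀ i, f i < om2) : iSup f < om2 :=
  Ordinal.iSup_lt_ord (by rwa [cof_om2]) hf

lemma iSup_lt_om1 {ι : Type} {f : ι → Ordinal} (hι : #ι < Cardinal.aleph 1)
    (hf : ∀ i, f i < om1) : iSup f < om1 :=
  Ordinal.iSup_lt_ord (by rwa [cof_om1]) hf

lemma sSup_lt_om2 {s : Set Ordinal} (hs : s.Countable) (hb : ∀ x ∈ s, x < om2) :
    sSup s < om2 := by
  rcases s.eq_empty_or_nonempty with rfl | hne
  · simpa using om2_isLimit.pos
  · obtain ⟨u, hu⟩ := hs.exists_eq_range hne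
    rw [hu, ← iSup]
    have h12 : (ℵ₀ : Cardinal.{0}) < Cardinal.aleph 2 :=
      Cardinal.aleph0_lt_aleph_one.trans aleph_one_lt_two
    exact iSup_lt_om2 (by simpa using h12) fun n => hb _ (hu ▸ Set.mem_range_self n)

def chainH (g : Ordinal → Ordinal) : Ordinal → Ordinal :=
  WellFounded.fix Ordinal.lt_wf fun β ih =>
    g (⨆ i : β.ToType, ih ((Ordinal.ToType.mk (o := β)).symm i).val
        ((Ordinal.ToType.mk (o := β)).symm i).2 + 1)

lemma chainH_eq (g : Ordinal → Ordinal) (β : Ordinal) :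
    chainH g β = g (⨆ i : β.ToType,
      chainH g ((Ordinal.ToType.mk (o := β)).symm i).val + 1) := by
  rw [chainH, WellFounded.fix_eq]

/-- The main combinatorial construction. -/
lemma key (Γ' : Set (Set Ordinal)) (hsub : Γ' ⊆ skelΓ)
    (hcof : ∀ S ∈ skelΓ, ∃ T ∈ Γ', S ⊆ T) :
    ∃ S ∈ Γ', ∃ T ∈ Γ', ∃ ξ ≤ om2, fS S (fS T ξ) ≠ fS T (fS S ξ) := by
  classical
  -- the set of achievable suprema of elements of Γ'
  set A : Set Ordinal := {a | ∃ S ∈ Γ', a < om2 ∧ sSup (S ∩ Set.Iio om2) = a} with hA_def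
  have hA : ∀ γ, γ < om2 → ∃ a ∈ A, γ < a := by
    intro γ hγ
    have hγ1 : γ + 1 < om2 := om2_isLimit.succ_lt hγ
    have hmemΓ : ({γ + 1, om2} : Set Ordinal) ∈ skelΓ := by
      refine ⟨Set.countable_insert.2 (Set.countable_singleton _),
        Set.mem_insert_of_mem _ rfl, ?_⟩
      rintro x (rfl | rfl)
      · exact Set.mem_Iic.2 (le_of_lt hγ1)
      · exact Set.mem_Iic.2 le_rfl
    obtain ⟨S, hSΓ', hSsub⟩ := hcof _ hmemΓ
    have hS : S ∈ skelΓ := hsub hSΓ'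
    have hbdd : BddAbove (S ∩ Set.Iio om2) := ⟨om2, fun x hx => le_of_lt hx.2⟩
    have hlt : sSup (S ∩ Set.Iio om2) < om2 :=
      sSup_lt_om2 (hS.1.mono Set.inter_subset_left) fun x hx => hx.2
    refine ⟨sSup (S ∩ Set.Iio om2), ⟨S, hSΓ', hlt, rfl⟩, ?_⟩
    have : γ + 1 ≤ sSup (S ∩ Set.Iio om2) :=
      le_csSup hbdd ⟨hSsub (Set.mem_insert _ _), hγ1⟩
    exact lt_of_lt_of_le (Order.lt_succ γ) (by rwa [Ordinal.add_one_eq_succ] at this)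
  choose! g hg1 hg2 using hA
  set h : Ordinal → Ordinal := chainH g with hh
  have hAlt : ∀ a ∈ A, a < om2 := by rintro a ⟨S, _, ha, _⟩; exact ha
  -- the auxiliary supremum at stage β
  have hsuplt : ∀ β, β < om1 → (∀ a, a < β → h a < om2) →
      (⨆ i : β.ToType, h ((Ordinal.ToType.mk (o := β)).symm i).val + 1) < om2 := by
    intro β hβ ih
    refine iSup_lt_om2 ?_ fun i => ?_
    · rw [Cardinal.mk_toType]
      exact (Cardinal.lt_ord.1 hβ).trans aleph_one_lt_two
    · exact om2_isLimit.succ_lt (ih _ ((Ordinal.ToType.mk (o := β)).symm i).2)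
  have hmemA : ∀ β, β < om1 → h β ∈ A := by
    intro β
    induction β using Ordinal.induction with
    | h β IH =>
      intro hβ
      have hσ := hsuplt β hβ fun a ha => hAlt _ (IH a ha (ha.trans hβ))
      rw [hh, chainH_eq]
      exact hg1 _ hσ
  have hlt2 : ∀ β, β < om1 → h β < om2 := fun β hβ => hAlt _ (hmemA β hβ)
  have hmono : ∀ a b, a < b → b < om1 → h a < h b := by
    intro a b hab hb
    have hσ := hsuplt b hb fun x hx => hlt2 x (hx.trans hb)
    have hle : h a + 1 ≤ ⨆ i : b.ToType, h ((Ordinal.ToType.mk (o := b)).symm i).val + 1 := by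
      have := le_ciSup (Ordinal.bddAbove_range
          (fun i : b.ToType => h ((Ordinal.ToType.mk (o := b)).symm i).val + 1))
        ((Ordinal.ToType.mk (o := b)) ⟨a, hab⟩)
      rwa [OrderIso.symm_apply_apply] at this
    have hb' : h b = g (⨆ i : b.ToType, h ((Ordinal.ToType.mk (o := b)).symm i).val + 1) :=
      chainH_eq g b
    have hfin : h a + 1 ≤ h b := by
      rw [hb']
      exact hle.trans (le_of_lt (hg2 _ hσ))
    have hlt1 : h a < h a + 1 := by
      rw [Ordinal.add_one_eq_succ]; exact Order.lt_succ _
    exact lt_of_lt_of_le hlt1 hfin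
  have hmono' : ∀ a b, a ≤ b → b < om1 → h a ≤ h b := by
    intro a b hab hb
    rcases lt_or_eq_of_le hab with hlt | rfl
    · exact (hmono a b hlt hb).le
    · exact le_rfl
  -- δ = sup of the chain
  set δ : Ordinal := ⨆ i : om1.ToType, h ((Ordinal.ToType.mk (o := om1)).symm i).val with hδ_def
  have hδom2 : δ < om2 := by
    refine iSup_lt_om2 ?_ fun i => hlt2 _ ((Ordinal.ToType.mk (o := om1)).symm i).2
    rw [Cardinal.mk_toType, om1, Cardinal.card_ord]
    exact aleph_one_lt_two
  have hδlt : ∀ β, β < om1 → h β < δ := by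
    intro β hβ
    have hβ1 : β + 1 < om1 := by
      rw [Ordinal.add_one_eq_succ]; exact om1_isLimit.succ_lt hβ
    have : h (β + 1) ≤ δ := by
      have := le_ciSup (Ordinal.bddAbove_range
          (fun i : om1.ToType => h ((Ordinal.ToType.mk (o := om1)).symm i).val))
        ((Ordinal.ToType.mk (o := om1)) ⟨β + 1, hβ1⟩)
      rwa [OrderIso.symm_apply_apply] at this
    exact lt_of_lt_of_le (hmono β (β + 1) (by rw [Ordinal.add_one_eq_succ]; exact Order.lt_succ β) hβ1) this
  have hδub : ∀ t, t < δ → ∃ β, β < om1 ∧ t < h β := by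
    intro t ht
    haveI : Nonempty om1.ToType :=
      Ordinal.nonempty_toType_iff.2 om1_isLimit.pos.ne'
    obtain ⟨b, ⟨i, rfl⟩, hb⟩ := exists_lt_of_lt_csSup (Set.range_nonempty _) ht
    exact ⟨_, ((Ordinal.ToType.mk (o := om1)).symm i).2, hb⟩
  -- choose T ∈ Γ' containing δ
  have hpairΓ : ({δ, om2} : Set Ordinal) ∈ skelΓ := by
    refine ⟨Set.countable_insert.2 (Set.countable_singleton _),
      Set.mem_insert_of_mem _ rfl, ?_⟩
    rintro x (rfl | rfl)
    · exact Set.mem_Iic.2 (le_of_lt hδom2)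
    · exact Set.mem_Iic.2 le_rfl
  obtain ⟨T, hTΓ', hTsub⟩ := hcof ({δ, om2} : Set Ordinal) hpairΓ
  have hT : T ∈ skelΓ := hsub hTΓ'
  have hδT : δ ∈ T := hTsub (Set.mem_insert _ _)
  -- bound the part of T below δ
  have hδpos : 0 < δ := lt_of_le_of_lt zero_le (hδlt 0 om1_isLimit.pos)
  set s' : Set Ordinal := insert 0 (T ∩ Set.Iio δ) with hs'_def
  have hs'c : s'.Countable := (hT.1.mono Set.inter_subset_left).insert 0
  obtain ⟨u, hu⟩ := hs'c.exists_eq_range ⟨0, Set.mem_insert _ _⟩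
  have hult : ∀ n, u n < δ := by
    intro n
    have : u n ∈ s' := hu ▸ Set.mem_range_self n
    rcases this with h0 | hmem
    · rw [h0]; exact hδpos
    · exact hmem.2
  choose βn hβn1 hβn2 using fun n => hδub (u n) (hult n)
  set βs : Ordinal := ⨆ n, βn n with hβs_def
  have hβsom1 : βs < om1 := by
    refine iSup_lt_om1 ?_ hβn1
    simpa using Cardinal.aleph0_lt_aleph_one
  have hTb : ∀ t ∈ T, t < δ → t < h βs := by
    intro t htT htδ
    have : t ∈ s' := Set.mem_insert_of_mem _ ⟨htT, htδ⟩
    rw [hu] at this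
    obtain ⟨n, rfl⟩ := this
    exact lt_of_lt_of_le (hβn2 n)
      (hmono' _ _ (le_ciSup (Ordinal.bddAbove_range βn) n) hβsom1)
  -- choose S at stage βs + 1
  have hβs1 : βs + 1 < om1 := by
    rw [Ordinal.add_one_eq_succ]; exact om1_isLimit.succ_lt hβsom1
  obtain ⟨S, hSΓ', hσom2, hσeq⟩ := hmemA (βs + 1) hβs1
  have hS : S ∈ skelΓ := hsub hSΓ'
  set σ : Ordinal := h (βs + 1) with hσ_def
  have hσδ : σ < δ := hδlt _ hβs1
  have hβσ : h βs < σ := hmono _ _ (by rw [Ordinal.add_one_eq_succ]; exact Order.lt_succ βs) hβs1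
  -- choose ξ ∈ S with h βs < ξ ≤ σ
  have hbddS : BddAbove (S ∩ Set.Iio om2) := ⟨om2, fun x hx => le_of_lt hx.2⟩
  have hne : (S ∩ Set.Iio om2).Nonempty := by
    by_contra hc
    rw [Set.not_nonempty_iff_eq_empty] at hc
    rw [hc] at hσeq
    have : σ = 0 := by rw [← hσeq, csSup_empty]; rfl
    exact not_lt_zero (this ▸ lt_of_le_of_lt zero_le hβσ)
  obtain ⟨ξ, hξmem, hξgt⟩ := exists_lt_of_lt_csSup hne (by rw [hσeq]; exact hβσ)
  have hξσ : ξ ≤ σ := hσeq ▸ le_csSup hbddS hξmem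
  have hξδ : ξ < δ := lt_of_le_of_lt hξσ hσδ
  have hξom2 : ξ ≤ om2 := le_of_lt hξmem.2
  -- the three computations
  have bddb : ∀ s : Set Ordinal, BddBelow s := fun s => OrderBot.bddBelow s
  have hfSξ : fS S ξ = ξ :=
    le_antisymm (csInf_le (bddb _) ⟨hξmem.1, le_refl ξ⟩)
      (le_csInf ⟨ξ, hξmem.1, le_refl ξ⟩ fun b hb => hb.2)
  have hfTξ : fS T ξ = δ := by
    refine le_antisymm (csInf_le (bddb _) ⟨hδT, le_of_lt hξδ⟩) (le_csInf ⟨δ, hδT, le_of_lt hξδ⟩ ?_)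
    rintro b ⟨hbT, hbξ⟩
    by_contra hc
    push_neg at hc
    exact absurd hbξ (not_le_of_gt ((hTb b hbT hc).trans hξgt))
  have hfSδ : fS S δ = om2 := by
    refine le_antisymm (csInf_le (bddb _) ⟨hS.2.1, le_of_lt hδom2⟩)
      (le_csInf ⟨om2, hS.2.1, le_of_lt hδom2⟩ ?_)
    rintro b ⟨hbS, hbδ⟩
    rcases lt_or_eq_of_le (Set.mem_Iic.1 (hS.2.2 hbS)) with hb2 | rfl
    · exfalso
      have : b ≤ σ := hσeq ▸ le_csSup hbddS ⟨hbS, hb2⟩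
      exact absurd hbδ (not_le_of_gt (lt_of_le_of_lt this hσδ))
    · exact le_rfl
  refine ⟨S, hSΓ', T, hTΓ', ξ, hξom2, ?_⟩
  rw [hfSξ, hfTξ, hfSδ]
  exact fun hcon => (ne_of_lt hδom2) hcon.symm

lemma bridge (Q : Set Ordinal → (ellOne →L[ℝ] ellOne))
    (hQ : ∀ S ∈ skelΓ, ∀ (x : ellOne) (β : OmTwoPlusOne),
      Q S x β = ∑' ξ : {ξ : OmTwoPlusOne // fS S ξ.val = β.val}, x ξ)
    {S T : Set Ordinal} (hS : S ∈ skelΓ) (hT : T ∈ skelΓ) {ξ : Ordinal} (hξ : ξ ≤ om2)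
    (hne : fS S (fS T ξ) ≠ fS T (fS S ξ)) :
    (Q S).comp (Q T) ≠ (Q T).comp (Q S) := by
  intro heq
  set ξh : OmTwoPlusOne := ⟨ξ, hξ⟩ with hξh
  set x : ellOne := lp.single 1 ξh 1 with hx
  set i₁ : OmTwoPlusOne := ⟨fS S (fS T ξ),
    fS_le_om2 hS (fS_le_om2 hT hξ)⟩ with hi₁
  set i₂ : OmTwoPlusOne := ⟨fS T (fS S ξ),
    fS_le_om2 hT (fS_le_om2 hS hξ)⟩ with hi₂
  have h1 : (Q S).comp (Q T) x = lp.single 1 i₁ 1 := by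
    rw [ContinuousLinearMap.comp_apply, hx, Q_single Q hQ hT ξh, Q_single Q hQ hS]
  have h2 : (Q T).comp (Q S) x = lp.single 1 i₂ 1 := by
    rw [ContinuousLinearMap.comp_apply, hx, Q_single Q hQ hS ξh, Q_single Q hQ hT]
  have h3 : (lp.single 1 i₁ 1 : ellOne) = lp.single 1 i₂ 1 := by
    rw [← h1, ← h2, heq]
  have h4 := congrArg (fun v : ellOne => v i₁) h3
  simp only [lp.single_apply_self] at h4
  rw [lp.single_apply_ne 1 i₂ 1 (fun hc => hne (Subtype.ext_iff.1 hc))] at h4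
  exact one_ne_zero h4

/-- the projections `Q_S` on `ℓ₁(ω₂+1)` do not commute on any cofinal
subfamily of `Γ`: for every cofinal `Γ' ⊆ skelΓ` there are `S, T ∈ Γ'` with
`Q_S ∘ Q_T ≠ Q_T ∘ Q_S`; consequently there exist `S, T ∈ Γ` and `ξ ≤ ω₂` with
`f_S (f_T ξ) ≠ f_T (f_S ξ)`. -/
theorem statement16 (Q : Set Ordinal → (ellOne →L[ℝ] ellOne))
    (hQ : ∀ S ∈ skelΓ, ∀ (x : ellOne) (β : OmTwoPlusOne),
      Q S x β = ∑' ξ : {ξ : OmTwoPlusOne // fS S ξ.val = β.val}, x ξ) :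
    (∀ Γ' ⊆ skelΓ, (∀ S ∈ skelΓ, ∃ T ∈ Γ', S ⊆ T) →
      ∃ S ∈ Γ', ∃ T ∈ Γ', (Q S).comp (Q T) ≠ (Q T).comp (Q S)) ∧
    ∃ S ∈ skelΓ, ∃ T ∈ skelΓ, ∃ ξ ≤ om2, fS S (fS T ξ) ≠ fS T (fS S ξ) := by
  constructor
  · intro Γ' hsub hcof
    obtain ⟨S, hSΓ', T, hTΓ', ξ, hξ, hne⟩ := key Γ' hsub hcof
    exact ⟨S, hSΓ', T, hTΓ', bridge Q hQ (hsub hSΓ') (hsub hTΓ') hξ hne⟩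
  · exact key skelΓ (fun _ h => h) (fun S hS => ⟨S, hS, subset_refl S⟩)

end
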